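/- arXiv:1503.06718 — 3 statements merged into one kernel-verified Lean document; each statement's English description precedes it below -/
import Mathlib

section
/- For d = 3 and h ≤ ⌈n/3⌉, one has C_{n,h}^{(3)} = ((h+1)(h+2) + (6·δ(3∣n) − 2)·δ(3∣h)) / 6, where δ(3∣m) is 1 if 3 divides m and 0 otherwise. -/
/-- `X_3 = {(1,-2,0), (-2,1,0), (-1,-1,1), (0,0,-1)}`. -/
def X3 : Set (Fin 3 → ℤ) := {![1, -2, 0], ![-2, 1, 0], ![-1, -1, 1], ![0, 0, -1]}

def nonneg3 (v : Fin 3 → ℤ) : Prop := ∀ i, 0 ≤ v i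

/-- Covering relation `v ⋖ w` on `Λ_3 = ℤ_{≥0}^3`. -/
def cov3 (v w : Fin 3 → ℤ) : Prop := nonneg3 v ∧ nonneg3 w ∧ ∃ x ∈ X3, v = w + x

/-- The order `≺` on `Λ_3`. -/
def prec3 : (Fin 3 → ℤ) → (Fin 3 → ℤ) → Prop := Relation.TransGen cov3

/-- The principal ideal `I(v) = {v} ∪ {w : w ≺ v}`. -/
def ideal3 (v : Fin 3 → ℤ) : Set (Fin 3 → ℤ) := {v} ∪ { w | prec3 w v }

/-- `C_n^{(3)} = |I(n·e(1))|`. -/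
noncomputable def C3 (n : ℕ) : ℕ := (ideal3 ![(n : ℤ), 0, 0]).ncard

/-- `C_{n,h}^{(3)}`: the number of elements of height `h` in `I(n·e(1))`. -/
noncomputable def C3h (n h : ℕ) : ℕ :=
  ({ w ∈ ideal3 ![(n : ℤ), 0, 0] | w 0 + w 1 + w 2 = (h : ℤ) }).ncard

/-! ### Auxiliary lemmas -/

lemma nonneg3_nat (a b c : ℕ) : nonneg3 ![(a:ℤ), b, c] := by
  intro i; fin_cases i <;> simp

lemma cov3_mk (a b c a' b' c' : ℕ) (x : Fin 3 → ℤ) (hx : x ∈ X3)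
    (h : (![(a:ℤ),b,c] : Fin 3 → ℤ) = ![(a':ℤ),b',c'] + x) :
    cov3 ![(a:ℤ),b,c] ![(a':ℤ),b',c'] :=
  ⟨nonneg3_nat a b c, nonneg3_nat a' b' c', x, hx, h⟩

lemma chainA (c a b : ℕ) :
    Relation.ReflTransGen cov3 ![(a:ℤ), b, c] ![(a:ℤ)+c, (b:ℤ)+c, 0] := by
  induction c generalizing a b with
  | zero => simpa using Relation.ReflTransGen.refl
  | succ c ih =>
    have step : cov3 ![(a:ℤ), b, (c:ℤ)+1] ![((a+1:ℕ):ℤ), ((b+1:ℕ):ℤ), c] := by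
      apply cov3_mk a b (c+1) (a+1) (b+1) c ![-1,-1,1] (by simp [X3])
      · funext i; fin_cases i <;> (push_cast; simp)
    have := ih (a+1) (b+1)
    have comp := Relation.ReflTransGen.head (by exact_mod_cast step) this
    convert comp using 2 <;> push_cast <;> ring_nf

lemma chainB (b a : ℕ) :
    Relation.ReflTransGen cov3 ![(a:ℤ), b, 0] ![(a:ℤ)+2*b, 0, 0] := by
  induction b generalizing a with
  | zero => simpa using Relation.ReflTransGen.refl
  | succ b ih =>
    have step : cov3 ![(a:ℤ), (b:ℤ)+1, 0] ![((a+2:ℕ):ℤ), (b:ℤ), 0] := by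
      apply cov3_mk a (b+1) 0 (a+2) b 0 ![-2,1,0] (by simp [X3])
      · funext i; fin_cases i <;> (push_cast; simp)
    have := ih (a+2)
    have comp := Relation.ReflTransGen.head (by exact_mod_cast step) this
    convert comp using 2 <;> push_cast <;> ring_nf

lemma chainC (k m : ℕ) :
    Relation.ReflTransGen cov3 ![(m:ℤ), 0, 0] ![(m:ℤ)+3*k, 0, 0] := by
  induction k generalizing m with
  | zero => simpa using Relation.ReflTransGen.refl
  | succ k ih =>
    have s1 : cov3 ![(m:ℤ), 0, 0] ![(m:ℤ), 0, 1] := by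
      apply cov3_mk m 0 0 m 0 1 ![0,0,-1] (by simp [X3])
      · funext i; fin_cases i <;> simp
    have s2 : cov3 ![(m:ℤ), 0, 1] ![(m:ℤ)+1, 1, 0] := by
      have := cov3_mk m 0 1 (m+1) 1 0 ![-1,-1,1] (by simp [X3])
        (by funext i; fin_cases i <;> (push_cast; simp))
      convert this using 2 <;> push_cast <;> ring_nf
    have s3 : cov3 ![(m:ℤ)+1, 1, 0] ![(m:ℤ)+3, 0, 0] := by
      have := cov3_mk (m+1) 1 0 (m+3) 0 0 ![-2,1,0] (by simp [X3])
        (by funext i; fin_cases i <;> (push_cast; simp) <;> ring)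
      convert this using 2 <;> push_cast <;> ring_nf
    have := ih (m+3)
    have comp := Relation.ReflTransGen.head s1 (Relation.ReflTransGen.head s2
      (Relation.ReflTransGen.head s3 (by exact_mod_cast this)))
    convert comp using 2 <;> push_cast <;> ring_nf

lemma reach3 (a b c k : ℕ) :
    Relation.ReflTransGen cov3 ![(a:ℤ), b, c] ![((a+2*b+3*c+3*k : ℕ):ℤ), 0, 0] := by
  have h1 := chainA c a b
  have h2 := chainB (b+c) (a+c)
  have h3 := chainC k (a+2*b+3*c)
  have h2' : Relation.ReflTransGen cov3 ![(a:ℤ)+c, (b:ℤ)+c, 0] ![((a+2*b+3*c:ℕ):ℤ), 0, 0] := by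
    convert h2 using 2 <;> push_cast <;> ring_nf
  have h3' : Relation.ReflTransGen cov3 ![((a+2*b+3*c:ℕ):ℤ), 0, 0]
      ![((a+2*b+3*c+3*k : ℕ):ℤ), 0, 0] := by
    convert h3 using 2 <;> push_cast <;> ring_nf
  exact (h1.trans h2').trans h3'

lemma cov3_step (n : ℕ) (a b : Fin 3 → ℤ) (hc : cov3 a b)
    (hb : ((b 0 - b 1 : ℤ) : ZMod 3) = (n : ZMod 3)) :
    ((a 0 - a 1 : ℤ) : ZMod 3) = (n : ZMod 3) := by
  obtain ⟨-, -, x, hx, rfl⟩ := hc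
  rcases hx with rfl|rfl|rfl|rfl <;>
    · simp only [Pi.add_apply] at *
      rw [← hb]
      simp only [Matrix.cons_val_zero, Matrix.cons_val_one, Matrix.head_cons]
      push_cast
      have h3 : (3 : ZMod 3) = 0 := by decide
      try linear_combination h3
      try linear_combination -h3
      try ring

lemma prec3_inv (n : ℕ) : ∀ {w v : Fin 3 → ℤ}, Relation.TransGen cov3 w v →
    ((v 0 - v 1 : ℤ) : ZMod 3) = (n : ZMod 3) →
    nonneg3 w ∧ ((w 0 - w 1 : ℤ) : ZMod 3) = (n : ZMod 3) := by
  intro w v h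
  induction h with
  | single hc => exact fun hv => ⟨hc.1, cov3_step _ _ _ hc hv⟩
  | tail _ hbc ih => exact fun hv => ih (cov3_step _ _ _ hbc hv)

lemma ideal3_inv (n : ℕ) (w : Fin 3 → ℤ) (hw : w ∈ ideal3 ![(n:ℤ),0,0]) :
    nonneg3 w ∧ ((w 0 - w 1 : ℤ) : ZMod 3) = (n : ZMod 3) := by
  rcases hw with rfl|hw
  · exact ⟨nonneg3_nat n 0 0, by simp⟩
  · exact prec3_inv n hw (by simp)

/-! ### Counting -/

lemma card_mod3 (u : ℕ) : ∀ m : ℕ, ((Finset.range m).filter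
    (fun b : ℕ => ((b : ZMod 3) = (u : ZMod 3)))).card = (m + 2 - u % 3)/3 := by
  intro m
  induction m with
  | zero => simp; omega
  | succ m ih =>
    rw [Finset.range_add_one, Finset.filter_insert]
    have hiff : ((m : ZMod 3) = (u : ZMod 3)) ↔ m % 3 = u % 3 := by
      rw [ZMod.natCast_eq_natCast_iff]; exact Iff.rfl
    by_cases hc : m % 3 = u % 3
    · rw [if_pos (hiff.mpr hc), Finset.card_insert_of_notMem (by simp), ih]
      omega
    · rw [if_neg (fun h => hc (hiff.mp h)), ih]
      omega

def Fval (n h : ℕ) : ℕ := ∑ a ∈ Finset.range (h+1), (h + 3 - a - (a + 2*n) % 3)/3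

lemma Fval_step (n h : ℕ) : Fval n (h+3) = Fval n h + (h+3) := by
  unfold Fval
  rw [show h+3+1 = (h+1)+1+1+1 by ring]
  rw [Finset.sum_range_succ, Finset.sum_range_succ, Finset.sum_range_succ]
  have hmain : ∑ a ∈ Finset.range (h+1), (h + 3 + 3 - a - (a + 2*n) % 3)/3
      = ∑ a ∈ Finset.range (h+1), ((h + 3 - a - (a + 2*n) % 3)/3 + 1) := by
    apply Finset.sum_congr rfl
    intro a ha
    have ha' : a ≤ h := by simpa [Nat.lt_succ_iff] using ha
    have hr : (a + 2*n) % 3 < 3 := Nat.mod_lt _ (by norm_num)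
    omega
  rw [hmain, Finset.sum_add_distrib, Finset.sum_const, Finset.card_range, smul_eq_mul, mul_one]
  have h1 : (h + 3 + 3 - (h+1) - ((h+1) + 2*n) % 3)/3
      + (h + 3 + 3 - (h+2) - ((h+2) + 2*n) % 3)/3
      + (h + 3 + 3 - (h+3) - ((h+3) + 2*n) % 3)/3 = 2 := by
    have e1 : h+1+2*n = (h+2*n)+1 := by omega
    have e2 : h+2+2*n = (h+2*n)+2 := by omega
    have e3 : h+3+2*n = (h+2*n)+3 := by omega
    rw [e1, e2, e3]
    omega
  omega

lemma Fval_eq (n : ℕ) : ∀ h : ℕ, 6 * Fval n h + (if 3 ∣ h ∧ ¬ 3 ∣ n then 2 else 0)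
    = (h+1)*(h+2) + (if 3 ∣ h ∧ 3 ∣ n then 4 else 0) := by
  intro h
  induction h using Nat.strong_induction_on with
  | _ h ih =>
    obtain ⟨q, t, ht, rfl⟩ : ∃ q t, t < 3 ∧ n = 3*q + t := ⟨n/3, n%3, by omega, by omega⟩
    rcases h with _|_|_|h
    · simp [Fval, Finset.sum_range_succ]
      interval_cases t <;> split_ifs <;> omega
    · simp [Fval, Finset.sum_range_succ]
      interval_cases t <;> (try split_ifs) <;> omega
    · simp [Fval, Finset.sum_range_succ]
      interval_cases t <;> (try split_ifs) <;> omega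
    · have e3 : h+1+1+1 = h+3 := by omega
      rw [e3] at *
      have IH := ih h (by omega)
      rw [Fval_step]
      have key : (h+3+1)*(h+3+2) = (h+1)*(h+2) + 6*(h+3) := by ring
      have hd : (3 ∣ h + 3) ↔ 3 ∣ h := by omega
      split_ifs at IH ⊢ <;> simp [hd, not_and_or] at * <;> omega

def F3 (n h : ℕ) : Finset (Fin 3 → ℤ) :=
  (Finset.range (h+1)).biUnion (fun a =>
    ((Finset.range (h+1-a)).filter
      (fun b : ℕ => ((b : ZMod 3) = ((a + 2*n : ℕ) : ZMod 3)))).image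
      (fun b : ℕ => ![(a:ℤ), (b:ℤ), (h:ℤ) - a - b]))

lemma F3_card (n h : ℕ) : (F3 n h).card = Fval n h := by
  unfold F3 Fval
  rw [Finset.card_biUnion]
  · apply Finset.sum_congr rfl
    intro a ha
    rw [Finset.card_image_of_injective _ (fun b b' hbb => by
      have := congrFun hbb 1
      simpa using this)]
    rw [card_mod3]
    have : a ≤ h := by simpa [Nat.lt_succ_iff] using ha
    omega
  · intro a ha a' ha' hne
    simp only [Finset.disjoint_left, Finset.mem_image, Finset.mem_filter]
    rintro w ⟨b, hb, rfl⟩ ⟨b', hb', hw⟩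
    have := congrFun hw 0
    simp at this
    exact hne (by exact_mod_cast this.symm)

lemma zmod_h3 : (3 : ZMod 3) = 0 := by decide

lemma cond_iff (n a b : ℕ) :
    ((b : ZMod 3) = ((a + 2*n : ℕ) : ZMod 3)) ↔
      ((a : ZMod 3) = (b : ZMod 3) + (n : ZMod 3)) := by
  push_cast
  constructor <;> intro h <;> linear_combination -h - (n : ZMod 3) * zmod_h3

lemma set_eq (n h : ℕ) (hnh : 3*h ≤ n + 2) :
    {w ∈ ideal3 ![(n:ℤ),0,0] | w 0 + w 1 + w 2 = (h:ℤ)} = ↑(F3 n h) := by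
  ext w
  simp only [Set.mem_setOf_eq, Finset.coe_biUnion, F3, Set.mem_iUnion, Finset.mem_coe,
    Finset.mem_image, Finset.mem_filter, Finset.mem_range]
  constructor
  · rintro ⟨hw, hsum⟩
    obtain ⟨hnn, hinv⟩ := ideal3_inv n w hw
    have ha : ((w 0).toNat : ℤ) = w 0 := Int.toNat_of_nonneg (hnn 0)
    have hb : ((w 1).toNat : ℤ) = w 1 := Int.toNat_of_nonneg (hnn 1)
    have hc : ((w 2).toNat : ℤ) = w 2 := Int.toNat_of_nonneg (hnn 2)
    set a := (w 0).toNat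
    set b := (w 1).toNat
    set c := (w 2).toNat
    have hsum' : a + b + c = h := by
      have : ((a + b + c : ℕ) : ℤ) = (h : ℤ) := by push_cast; rw [ha, hb, hc]; exact hsum
      exact_mod_cast this
    refine ⟨a, ?_, ⟨b, ⟨?_, ?_⟩, ?_⟩⟩
    · omega
    · omega
    · rw [cond_iff]
      have : (((a : ℤ) - b : ℤ) : ZMod 3) = (n : ZMod 3) := by rw [ha, hb]; exact hinv
      push_cast at this ⊢
      linear_combination this
    · funext i
      fin_cases i
      · exact ha
      · exact hb
      · show (h:ℤ) - a - b = w 2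
        rw [← hc]; push_cast; omega
  · rintro ⟨a, ha, b, ⟨hb, hcong⟩, rfl⟩
    have hab : a + b ≤ h := by omega
    set c : ℕ := h - a - b with hcdef
    have hc3 : (h:ℤ) - a - b = (c : ℤ) := by push_cast; omega
    constructor
    · have hm : (((a + 2*b + 3*c : ℕ)) : ZMod 3) = (n : ZMod 3) := by
        rw [cond_iff] at hcong
        push_cast
        linear_combination hcong + ((b:ZMod 3) + (c : ZMod 3)) * zmod_h3
      have hmod : (a + 2*b + 3*c) % 3 = n % 3 := by
        rwa [ZMod.natCast_eq_natCast_iff] at hm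
      have hmn : a + 2*b + 3*c ≤ n := by omega
      obtain ⟨k, hk⟩ : ∃ k, n = a + 2*b + 3*c + 3*k := ⟨(n - (a+2*b+3*c))/3, by omega⟩
      have hr := reach3 a b c k
      rw [← hk] at hr
      rw [hc3]
      rcases Relation.reflTransGen_iff_eq_or_transGen.mp hr with heq | htr
      · left; exact heq.symm
      · right; exact htr
    · rw [hc3]; simp; push_cast; omega

theorem stmt10 (n h : ℕ) (hh : h ≤ (n + 2) / 3) :
    6 * (C3h n h : ℤ) =
      ((h : ℤ) + 1) * ((h : ℤ) + 2) +
        (6 * (if 3 ∣ n then (1 : ℤ) else 0) - 2) * (if 3 ∣ h then (1 : ℤ) else 0) := by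
  have hnh : 3*h ≤ n+2 := by
    have := (Nat.le_div_iff_mul_le (by norm_num : 0 < 3)).mp hh
    omega
  have hC : C3h n h = Fval n h := by
    unfold C3h
    rw [set_eq n h hnh, Set.ncard_coe_finset, F3_card]
  rw [hC]
  have HF := Fval_eq n h
  have hcast := congrArg (fun x : ℕ => (x : ℤ)) HF
  push_cast at hcast
  split_ifs at hcast ⊢ <;> first | linarith | (exfalso; tauto)
end

section
/- For i ∈ ℕ, the quantities C_{3(i-1)}^{(3)}, C_{3(i-1)+1}^{(3)}, C_{3(i-1)+2}^{(3)} are given by the closed formulas: C_{3(i-1)}^{(3)} = (1/8)((i+1)(2i^2+i+1) − (1+(−1)^i)/2), C_{3(i-1)+1}^{(3)} = (1/8)((i+1)(2i^2+3i−1) + (1+(−1)^i)/2), and C_{3(i-1)+2}^{(3)} = (1/8)((i+1)(2i^2+5i+1) − (1+(−1)^i)/2). -/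
/-! ### Auxiliary development -/

open Finset

def Sset (n : ℕ) : Set (Fin 3 → ℤ) :=
  {w | (∀ i, 0 ≤ w i) ∧ w 0 + 2 * w 1 + 3 * w 2 ≤ (n : ℤ) ∧
    (3 : ℤ) ∣ ((n : ℤ) - (w 0 + 2 * w 1 + 3 * w 2))}

lemma cov3_step_s15 {n : ℕ} {a b : Fin 3 → ℤ} (h : cov3 a b) (hb : b ∈ Sset n) :
    a ∈ Sset n := by
  obtain ⟨ha, hbn, x, hx, rfl⟩ := h
  obtain ⟨hb0, hb1, hb2⟩ := hb
  refine ⟨ha, ?_, ?_⟩ <;>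
  · simp only [X3, Set.mem_insert_iff, Set.mem_singleton_iff] at hx
    rcases hx with rfl | rfl | rfl | rfl <;>
      simp only [Pi.add_apply, Matrix.cons_val_zero, Matrix.cons_val_one, Matrix.head_cons,
        Matrix.cons_val_two, Matrix.tail_cons] <;> omega

lemma top_mem (n : ℕ) : ![(n : ℤ), 0, 0] ∈ Sset n := by
  refine ⟨?_, ?_, ?_⟩
  · intro i; fin_cases i <;> simp
  · simp
  · simp

lemma ideal_subset (n : ℕ) : ideal3 ![(n : ℤ), 0, 0] ⊆ Sset n := by
  intro w hw
  rcases hw with rfl | hw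
  · exact top_mem n
  · refine Relation.TransGen.head_induction_on hw ?_ ?_
    · intro a h; exact cov3_step_s15 h (top_mem n)
    · intro a c h _ hc; exact cov3_step_s15 h hc

lemma sset_reach (n : ℕ) : ∀ g : ℕ, ∀ w ∈ Sset n,
    w 0 + w 1 + w 2 = (n : ℤ) - g → w ∈ ideal3 ![(n : ℤ), 0, 0] := by
  intro g
  induction g with
  | zero =>
    intro w ⟨hnn, hle, _⟩ hh
    left
    have h0 := hnn 0; have h1 := hnn 1; have h2 := hnn 2
    have e1 : w 1 = 0 := by omega
    have e2 : w 2 = 0 := by omega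
    have e0 : w 0 = (n : ℤ) := by omega
    funext i; fin_cases i <;> simp [e0, e1, e2]
  | succ g ih =>
    intro w hw hh
    obtain ⟨hnn, hle, hdvd⟩ := hw
    have h0 := hnn 0; have h1 := hnn 1; have h2 := hnn 2
    have key : ∃ w' ∈ Sset n, cov3 w w' ∧ w' 0 + w' 1 + w' 2 = (n : ℤ) - g := by
      by_cases hs : w 0 + 2 * w 1 + 3 * w 2 ≤ (n : ℤ) - 3
      · refine ⟨![w 0, w 1, w 2 + 1], ⟨?_, by simp; omega, by simp; omega⟩,
          ⟨hnn, ?_, ![0,0,-1], by simp [X3], ?_⟩, by simp; omega⟩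
        · intro i; fin_cases i <;> simp <;> omega
        · intro i; fin_cases i <;> simp <;> omega
        · funext i; fin_cases i <;> simp
      · have hs' : w 0 + 2 * w 1 + 3 * w 2 = (n : ℤ) := by omega
        have hbc : 1 ≤ w 1 ∨ 1 ≤ w 2 := by omega
        rcases hbc with hb | hc
        · refine ⟨![w 0 + 2, w 1 - 1, w 2], ⟨?_, by simp; omega, by simp; omega⟩,
            ⟨hnn, ?_, ![-2,1,0], by simp [X3], ?_⟩, by simp; omega⟩
          · intro i; fin_cases i <;> simp <;> omega
          · intro i; fin_cases i <;> simp <;> omega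
          · funext i; fin_cases i <;> simp
        · refine ⟨![w 0 + 1, w 1 + 1, w 2 - 1], ⟨?_, by simp; omega, by simp; omega⟩,
            ⟨hnn, ?_, ![-1,-1,1], by simp [X3], ?_⟩, by simp; omega⟩
          · intro i; fin_cases i <;> simp <;> omega
          · intro i; fin_cases i <;> simp <;> omega
          · funext i; fin_cases i <;> simp
    obtain ⟨w', hw', hcov, hh'⟩ := key
    rcases ih w' hw' hh' with h | h
    · right; exact Relation.TransGen.single (h ▸ hcov)
    · right; exact Relation.TransGen.head hcov h

lemma ideal_eq (n : ℕ) : ideal3 ![(n : ℤ), 0, 0] = Sset n := by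
  apply Set.Subset.antisymm (ideal_subset n)
  intro w hw
  obtain ⟨hnn, hle, hdvd⟩ := hw
  have h0 := hnn 0; have h1 := hnn 1; have h2 := hnn 2
  refine sset_reach n ((n : ℤ) - (w 0 + w 1 + w 2)).toNat w ⟨hnn, hle, hdvd⟩ ?_
  omega

def Tn (n : ℕ) : Finset (ℕ × ℕ × ℕ) :=
  ((range (n+1)) ×ˢ (range (n+1)) ×ˢ (range (n+1))).filter
    (fun p => p.1 + 2 * p.2.1 + 3 * p.2.2 ≤ n ∧ 3 ∣ (n - (p.1 + 2 * p.2.1 + 3 * p.2.2)))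

def vecOf (p : ℕ × ℕ × ℕ) : Fin 3 → ℤ := ![(p.1 : ℤ), (p.2.1 : ℤ), (p.2.2 : ℤ)]

lemma vecOf_injective : Function.Injective vecOf := by
  intro p q h
  have h0 := congrFun h 0
  have h1 := congrFun h 1
  have h2 := congrFun h 2
  simp only [vecOf, Matrix.cons_val_zero, Matrix.cons_val_one, Matrix.head_cons,
    Matrix.cons_val_two, Matrix.tail_cons, Nat.cast_inj] at h0 h1 h2
  exact Prod.ext h0 (Prod.ext h1 h2)

lemma sset_eq_image (n : ℕ) : Sset n = vecOf '' ↑(Tn n) := by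
  ext w
  constructor
  · rintro ⟨hnn, hle, hdvd⟩
    have h0 := hnn 0; have h1 := hnn 1; have h2 := hnn 2
    refine ⟨((w 0).toNat, (w 1).toNat, (w 2).toNat), ?_, ?_⟩
    · simp only [Finset.coe_filter, Tn, Set.mem_setOf_eq, mem_product, mem_range]
      omega
    · funext i; fin_cases i <;> simp [vecOf] <;> omega
  · rintro ⟨⟨a, b, c⟩, hp, rfl⟩
    simp only [Finset.coe_filter, Tn, Set.mem_setOf_eq, mem_product, mem_range] at hp
    refine ⟨?_, ?_, ?_⟩
    · intro i; fin_cases i <;> simp [vecOf]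
    · simp only [vecOf, Matrix.cons_val_zero, Matrix.cons_val_one, Matrix.head_cons,
        Matrix.cons_val_two, Matrix.tail_cons]
      omega
    · simp only [vecOf, Matrix.cons_val_zero, Matrix.cons_val_one, Matrix.head_cons,
        Matrix.cons_val_two, Matrix.tail_cons]
      omega

lemma C3_eq_card (n : ℕ) : C3 n = (Tn n).card := by
  rw [C3, ideal_eq, sset_eq_image, Set.ncard_image_of_injective _ vecOf_injective,
    Set.ncard_coe_finset]

def Vn (n : ℕ) : Finset (ℕ × ℕ) :=
  ((range (n+1)) ×ˢ (range (n+1))).filter (fun q => 2 * q.1 + 3 * q.2 ≤ n)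

lemma card_Tn (n : ℕ) :
    (Tn n).card = ∑ q ∈ Vn n, (q.2 + 1) := by
  rw [card_eq_sum_card_fiberwise
    (f := fun p : ℕ × ℕ × ℕ => (p.2.1, p.2.2 + (n - (p.1 + 2 * p.2.1 + 3 * p.2.2)) / 3))
    (t := Vn n)]
  · apply sum_congr rfl
    intro q hq
    simp only [Vn, mem_filter, mem_product, mem_range] at hq
    obtain ⟨⟨hb, hj⟩, hle⟩ := hq
    have himg : (Tn n).filter
        (fun p => (p.2.1, p.2.2 + (n - (p.1 + 2 * p.2.1 + 3 * p.2.2)) / 3) = q)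
        = (range (q.2 + 1)).image (fun c => (n - 2 * q.1 - 3 * q.2, q.1, c)) := by
      ext ⟨a, b, c⟩
      simp only [mem_filter, mem_image, mem_range, Tn, mem_product, Prod.ext_iff]
      constructor
      · rintro ⟨⟨⟨ha, hb', hc⟩, hs, hd⟩, h1, h2⟩
        exact ⟨c, by omega, by omega, by omega, rfl⟩
      · rintro ⟨x, hx, h1, h2, rfl⟩
        refine ⟨⟨⟨?_, ?_, ?_⟩, ?_, ?_⟩, ?_, ?_⟩ <;> omega
    rw [himg, card_image_of_injective _ (by intro x y h; simpa [Prod.ext_iff] using h),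
      card_range]
  · intro p hp
    simp only [Finset.mem_coe, Tn, mem_filter, mem_product, mem_range] at hp
    simp only [Finset.mem_coe, Vn, mem_filter, mem_product, mem_range]
    omega

lemma sum_Vn (n : ℕ) :
    ∑ q ∈ Vn n, (q.2 + 1)
      = ∑ j ∈ range (n+1), (if 3 * j ≤ n then ((n - 3 * j) / 2 + 1) * (j + 1) else 0) := by
  rw [Vn, sum_filter, Finset.sum_product_right]
  apply sum_congr rfl
  intro j _
  by_cases hj : 3 * j ≤ n
  · simp only [hj, if_true]
    have : ∀ b ∈ range (n+1), (if 2 * b + 3 * j ≤ n then j + 1 else 0)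
        = (if b ∈ range ((n - 3*j)/2 + 1) then j + 1 else 0) := by
      intro b hb
      simp only [mem_range] at hb ⊢
      congr 1
      simp only [eq_iff_iff]
      omega
    rw [sum_congr rfl this, sum_ite_mem, inter_comm,
      (inter_eq_left (s := range ((n - 3*j)/2 + 1))).2 (by
        apply range_subset_range.2; omega), sum_const, card_range]
    ring
  · have : ∀ b ∈ range (n+1), (if 2 * b + 3 * j ≤ n then j + 1 else 0) = 0 := by
      intro b _; rw [if_neg]; omega
    rw [sum_congr rfl this, sum_const_zero, if_neg hj]

def Asum (r i : ℕ) : ℕ := ∑ m ∈ range i, ((3 * m + r) / 2 + 1) * (i - m)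
def Bsum (r i : ℕ) : ℕ := ∑ m ∈ range i, ((3 * m + r) / 2 + 1)

lemma card_Tn_eq_Asum (k r : ℕ) (hr : r ≤ 2) : (Tn (3 * k + r)).card = Asum r (k + 1) := by
  rw [card_Tn, sum_Vn]
  rw [← Finset.sum_subset (s₁ := range (k+1)) (by apply range_subset_range.2; omega)
    (by intro j _ hj; simp only [mem_range] at hj; rw [if_neg]; omega)]
  rw [← Finset.sum_range_reflect]
  apply sum_congr rfl
  intro m hm
  simp only [mem_range] at hm
  have h1 : k + 1 - 1 - m = k - m := by omega
  have h2 : 3 * (k - m) ≤ 3 * k + r := by omega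
  rw [h1, if_pos h2]
  congr 2 <;> omega

lemma Arec (r i : ℕ) : Asum r (i + 1) = Asum r i + Bsum r (i + 1) := by
  unfold Asum Bsum
  have : ∀ m ∈ range (i + 1), ((3 * m + r) / 2 + 1) * (i + 1 - m)
      = ((3 * m + r) / 2 + 1) * (i - m) + ((3 * m + r) / 2 + 1) := by
    intro m hm; simp only [mem_range] at hm
    have : i + 1 - m = (i - m) + 1 := by omega
    rw [this, Nat.mul_succ]
  rw [sum_congr rfl this, sum_add_distrib, sum_range_succ (f := fun m => ((3*m+r)/2+1)*(i-m)),
    Nat.sub_self, Nat.mul_zero, Nat.add_zero]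

lemma neg_one_pow_double (t : ℕ) : ((-1 : ℚ)) ^ (t + t) = 1 := by
  rw [← two_mul, pow_mul]; norm_num

lemma neg_one_pow_double_succ (t : ℕ) : ((-1 : ℚ)) ^ (t + t + 1) = -1 := by
  rw [pow_succ, neg_one_pow_double]; norm_num

lemma Bval (r : ℕ) (hr : r ≤ 2) (c : ℚ) (hc : c = if r = 1 then -1 else 1) (i : ℕ) :
    (Bsum r i : ℚ) = (3 * i ^ 2 + 2 * r * i + c * (1 - (-1) ^ i) / 2) / 4 := by
  induction i with
  | zero => simp [Bsum]
  | succ i ih =>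
    rw [Bsum, sum_range_succ, ← Bsum]
    push_cast
    rw [ih]
    rcases Nat.even_or_odd i with ⟨t, rfl⟩ | ⟨t, rfl⟩
    · rw [neg_one_pow_double,
        show (t + t + 1 : ℕ) = t + t + 1 from rfl, neg_one_pow_double_succ,
        show (3 * (t + t) + r) / 2 = 3 * t + r / 2 from by omega]
      interval_cases r <;> norm_num at hc ⊢ <;> subst hc <;> push_cast <;> ring
    · rw [show (2 * t + 1 + 1 : ℕ) = (t + 1) + (t + 1) from by ring, neg_one_pow_double,
        show (2 * t + 1 : ℕ) = t + t + 1 from by ring, neg_one_pow_double_succ,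
        show (3 * (t + t + 1) + r) / 2 = 3 * t + 1 + (r + 1) / 2 from by omega]
      interval_cases r <;> norm_num at hc ⊢ <;> subst hc <;> push_cast <;> ring

lemma neg_one_flip (i : ℕ) : ((-1 : ℚ)) ^ i = -(-1 : ℚ) ^ (i + 1) := by
  rw [pow_succ]; ring

lemma Aval0 (i : ℕ) : (Asum 0 i : ℚ)
    = (1 / 8) * (((i : ℚ) + 1) * (2 * (i : ℚ) ^ 2 + i + 1) - (1 + (-1 : ℚ) ^ i) / 2) := by
  induction i with
  | zero => simp [Asum]
  | succ i ih =>
    rw [Arec]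
    push_cast
    rw [ih, Bval 0 (by norm_num) 1 (by norm_num) (i + 1), neg_one_flip i]
    push_cast
    ring

lemma Aval1 (i : ℕ) : (Asum 1 i : ℚ)
    = (1 / 8) * (((i : ℚ) + 1) * (2 * (i : ℚ) ^ 2 + 3 * i - 1) + (1 + (-1 : ℚ) ^ i) / 2) := by
  induction i with
  | zero => simp [Asum]
  | succ i ih =>
    rw [Arec]
    push_cast
    rw [ih, Bval 1 (by norm_num) (-1) (by norm_num) (i + 1), neg_one_flip i]
    push_cast
    ring

lemma Aval2 (i : ℕ) : (Asum 2 i : ℚ)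
    = (1 / 8) * (((i : ℚ) + 1) * (2 * (i : ℚ) ^ 2 + 5 * i + 1) - (1 + (-1 : ℚ) ^ i) / 2) := by
  induction i with
  | zero => simp [Asum]
  | succ i ih =>
    rw [Arec]
    push_cast
    rw [ih, Bval 2 (by norm_num) 1 (by norm_num) (i + 1), neg_one_flip i]
    push_cast
    ring

lemma C3_eq_Asum (k r : ℕ) (hr : r ≤ 2) : C3 (3 * k + r) = Asum r (k + 1) := by
  rw [C3_eq_card, card_Tn_eq_Asum k r hr]

theorem stmt15 (i : ℕ) (hi : 1 ≤ i) :
    (C3 (3 * (i - 1)) : ℚ) =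
      (1 / 8) * (((i : ℚ) + 1) * (2 * (i : ℚ) ^ 2 + i + 1) - (1 + (-1 : ℚ) ^ i) / 2) ∧
    (C3 (3 * (i - 1) + 1) : ℚ) =
      (1 / 8) * (((i : ℚ) + 1) * (2 * (i : ℚ) ^ 2 + 3 * i - 1) + (1 + (-1 : ℚ) ^ i) / 2) ∧
    (C3 (3 * (i - 1) + 2) : ℚ) =
      (1 / 8) * (((i : ℚ) + 1) * (2 * (i : ℚ) ^ 2 + 5 * i + 1) - (1 + (-1 : ℚ) ^ i) / 2) := by
  obtain ⟨k, rfl⟩ : ∃ k, i = k + 1 := ⟨i - 1, by omega⟩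
  have hk : k + 1 - 1 = k := rfl
  refine ⟨?_, ?_, ?_⟩
  · rw [hk, show 3 * k = 3 * k + 0 from rfl, C3_eq_Asum k 0 (by norm_num), Aval0 (k + 1)]
  · rw [hk, C3_eq_Asum k 1 (by norm_num), Aval1 (k + 1)]
  · rw [hk, C3_eq_Asum k 2 (by norm_num), Aval2 (k + 1)]
end

section
/- For every n ≥ 0 and every (x,y,z) ∈ ℤ_{≥0}^3, there is at most one distinguished character (a_1,...,a_6) with a_1 = x+y+z, a_3 = y+z, a_5 = z and a_1+a_2+a_3+a_4+a_5+a_6 = 2n; moreover the signature map H ↦ (a_1 - a_3, a_3 - a_5, a_5) gives a bijection between distinguished characters of perimeter 2n and the principal ideal I(n·e(1)) in (ℤ_{≥0}^3, ≺). -/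
/-- A distinguished character of a t-hexagon. -/
def DChar (a : Fin 6 → ℕ) : Prop :=
  a 0 + a 1 = a 3 + a 4 ∧ a 1 + a 2 = a 4 + a 5 ∧
  a 0 + a 2 + a 4 ≤ a 1 + a 3 + a 5 ∧ a 2 ≤ a 0 ∧ a 4 ≤ a 2

/- ### Auxiliary development -/

private lemma nonneg3_mk {a b c : ℤ} (ha : 0 ≤ a) (hb : 0 ≤ b) (hc : 0 ≤ c) :
    nonneg3 ![a, b, c] := by
  intro i; fin_cases i <;> simpa

private lemma vec_ext {a b c d e f : ℤ} (h1 : a = d) (h2 : b = e) (h3 : c = f) :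
    (![a, b, c] : Fin 3 → ℤ) = ![d, e, f] := by
  subst h1 h2 h3; rfl

private lemma vec_add3 (a b c d e f : ℤ) :
    (![a, b, c] + ![d, e, f] : Fin 3 → ℤ) = ![a + d, b + e, c + f] := by
  funext i; fin_cases i <;> simp

private abbrev rtg3 := Relation.ReflTransGen cov3

private lemma cov_step2 {a b c : ℤ} (ha : 0 ≤ a) (hb : 0 ≤ b) (hc : 0 ≤ c) :
    cov3 ![a, b + 1, c] ![a + 2, b, c] := by
  refine ⟨nonneg3_mk ha (by linarith) hc, nonneg3_mk (by linarith) hb hc,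
    ![-2, 1, 0], by simp [X3], ?_⟩
  rw [vec_add3]; exact vec_ext (by ring) (by ring) (by ring)

private lemma cov_step3 {a b c : ℤ} (ha : 0 ≤ a) (hb : 0 ≤ b) (hc : 0 ≤ c) :
    cov3 ![a, b, c + 1] ![a + 1, b + 1, c] := by
  refine ⟨nonneg3_mk ha hb (by linarith), nonneg3_mk (by linarith) (by linarith) hc,
    ![-1, -1, 1], by simp [X3], ?_⟩
  rw [vec_add3]; exact vec_ext (by ring) (by ring) (by ring)

private lemma cov_step4 {a b c : ℤ} (ha : 0 ≤ a) (hb : 0 ≤ b) (hc : 0 ≤ c) :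
    cov3 ![a, b, c] ![a, b, c + 1] := by
  refine ⟨nonneg3_mk ha hb hc, nonneg3_mk ha hb (by linarith),
    ![0, 0, -1], by simp [X3], ?_⟩
  rw [vec_add3]; exact vec_ext (by ring) (by ring) (by ring)

/-- flatten the third coordinate -/
private lemma upA (x y : ℤ) (hx : 0 ≤ x) (hy : 0 ≤ y) (z : ℕ) :
    rtg3 ![x, y, (z : ℤ)] ![x + z, y + z, 0] := by
  induction z generalizing x y with
  | zero => simpa using Relation.ReflTransGen.refl
  | succ z ih =>
      have step : cov3 ![x, y, ((z : ℤ) + 1)] ![x + 1, y + 1, (z : ℤ)] :=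
        cov_step3 hx hy (by positivity)
      have tail := ih (x + 1) (y + 1) (by linarith) (by linarith)
      have e : (((z : ℕ) + 1 : ℕ) : ℤ) = (z : ℤ) + 1 := by push_cast; ring
      rw [e]
      refine Relation.ReflTransGen.head step ?_
      have e1 : x + 1 + (z : ℤ) = x + ((z : ℤ) + 1) := by ring
      have e2 : y + 1 + (z : ℤ) = y + ((z : ℤ) + 1) := by ring
      rwa [e1, e2] at tail

/-- flatten the second coordinate -/
private lemma upB (x : ℤ) (hx : 0 ≤ x) (y : ℕ) :
    rtg3 ![x, (y : ℤ), 0] ![x + 2 * y, 0, 0] := by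
  induction y generalizing x with
  | zero => simpa using Relation.ReflTransGen.refl
  | succ y ih =>
      have step : cov3 ![x, (y : ℤ) + 1, 0] ![x + 2, (y : ℤ), 0] :=
        cov_step2 hx (by positivity) le_rfl
      have tail := ih (x + 2) (by linarith)
      have e : (((y : ℕ) + 1 : ℕ) : ℤ) = (y : ℤ) + 1 := by push_cast; ring
      rw [e]
      refine Relation.ReflTransGen.head step ?_
      have e1 : x + 2 + 2 * (y : ℤ) = x + 2 * ((y : ℤ) + 1) := by ring
      rwa [e1] at tail

/-- climb by 3 along the first axis -/
private lemma up3 (m : ℤ) (hm : 0 ≤ m) : rtg3 ![m, 0, 0] ![m + 3, 0, 0] := by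
  have s1 : cov3 ![m, 0, 0] ![m, 0, 1] := by
    simpa using cov_step4 hm le_rfl le_rfl
  have s2 : cov3 ![m, 0, 1] ![m + 1, 1, 0] := by
    simpa using cov_step3 hm le_rfl le_rfl
  have s3 : cov3 ![m + 1, 0 + 1, 0] ![m + 1 + 2, 0, 0] :=
    cov_step2 (by linarith) le_rfl le_rfl
  have s3' : cov3 ![m + 1, 1, 0] ![m + 3, 0, 0] := by
    have h1 : m + 1 + 2 = m + 3 := by ring
    have h2 : (0 : ℤ) + 1 = 1 := by ring
    rwa [h1, h2] at s3
  exact Relation.ReflTransGen.head s1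
    (Relation.ReflTransGen.head s2 (Relation.ReflTransGen.single s3'))

private lemma up3k (m : ℤ) (hm : 0 ≤ m) (k : ℕ) :
    rtg3 ![m, 0, 0] ![m + 3 * k, 0, 0] := by
  induction k with
  | zero => simpa using Relation.ReflTransGen.refl
  | succ k ih =>
      have h2 : rtg3 ![m + 3 * (k : ℤ), 0, 0] ![m + 3 * (k : ℤ) + 3, 0, 0] :=
        up3 _ (by positivity)
      have e : (((k : ℕ) + 1 : ℕ) : ℤ) = (k : ℤ) + 1 := by push_cast; ring
      have e2 : m + 3 * ((k : ℤ) + 1) = m + 3 * (k : ℤ) + 3 := by ring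
      rw [e, e2]
      exact ih.trans h2

/-- reachability: every admissible point lies below `(n,0,0)`. -/
private lemma reach (n : ℕ) (v : Fin 3 → ℤ) (hv : nonneg3 v)
    (k : ℕ) (hk : v 0 + 2 * v 1 + 3 * v 2 + 3 * k = (n : ℤ)) :
    rtg3 v ![(n : ℤ), 0, 0] := by
  obtain ⟨x, hx⟩ := Int.eq_ofNat_of_zero_le (hv 0)
  obtain ⟨y, hy⟩ := Int.eq_ofNat_of_zero_le (hv 1)
  obtain ⟨z, hz⟩ := Int.eq_ofNat_of_zero_le (hv 2)
  have hveq : v = ![(x : ℤ), (y : ℤ), (z : ℤ)] := by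
    funext i; fin_cases i <;> simp [hx, hy, hz]
  have h1 : rtg3 v ![(x : ℤ) + z, (y : ℤ) + z, 0] := by
    rw [hveq]; exact upA _ _ (by positivity) (by positivity) z
  have h2 : rtg3 ![(x : ℤ) + z, (y : ℤ) + z, 0]
      ![(x : ℤ) + z + 2 * ((y : ℕ) + z : ℕ), 0, 0] := by
    have h := upB ((x : ℤ) + z) (by positivity) (y + z)
    have e : (((y : ℕ) + z : ℕ) : ℤ) = (y : ℤ) + z := by push_cast; ring
    rwa [e] at h
  have h3 : rtg3 ![(x : ℤ) + z + 2 * ((y : ℕ) + z : ℕ), 0, 0]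
      ![(x : ℤ) + z + 2 * ((y : ℕ) + z : ℕ) + 3 * k, 0, 0] :=
    up3k _ (by positivity) k
  have hfin : (x : ℤ) + z + 2 * ((y : ℕ) + z : ℕ) + 3 * k = (n : ℤ) := by
    rw [hx, hy, hz] at hk; push_cast at hk ⊢; linarith
  rw [hfin] at h3
  exact (h1.trans h2).trans h3

/-- the invariant is preserved going down one covering step. -/
private lemma inv_step {n : ℕ} {a c : Fin 3 → ℤ} (h : cov3 a c)
    (hc : c 0 + 2 * c 1 + 3 * c 2 ≤ (n : ℤ) ∧ (3 : ℤ) ∣ ((n : ℤ) - (c 0 + 2 * c 1 + 3 * c 2))) :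
    nonneg3 a ∧ a 0 + 2 * a 1 + 3 * a 2 ≤ (n : ℤ) ∧
      (3 : ℤ) ∣ ((n : ℤ) - (a 0 + 2 * a 1 + 3 * a 2)) := by
  obtain ⟨hva, _, x, hx, he⟩ := h
  refine ⟨hva, ?_⟩
  have e0 := congrFun he 0
  have e1 := congrFun he 1
  have e2 := congrFun he 2
  have hx' : x = ![1,-2,0] ∨ x = ![-2,1,0] ∨ x = ![-1,-1,1] ∨ x = ![0,0,-1] := by
    simpa [X3] using hx
  obtain ⟨hle, hdvd⟩ := hc
  rcases hx' with rfl | rfl | rfl | rfl <;>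
    simp [Pi.add_apply] at e0 e1 e2 <;> constructor <;> omega

private lemma inv_top (n : ℕ) :
    nonneg3 ![(n : ℤ), 0, 0] ∧
      (![(n : ℤ), 0, 0] : Fin 3 → ℤ) 0 + 2 * (![(n : ℤ), 0, 0] : Fin 3 → ℤ) 1 +
        3 * (![(n : ℤ), 0, 0] : Fin 3 → ℤ) 2 ≤ (n : ℤ) ∧
      (3 : ℤ) ∣ ((n : ℤ) - ((![(n : ℤ), 0, 0] : Fin 3 → ℤ) 0 +
        2 * (![(n : ℤ), 0, 0] : Fin 3 → ℤ) 1 + 3 * (![(n : ℤ), 0, 0] : Fin 3 → ℤ) 2)) := by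
  refine ⟨nonneg3_mk (by positivity) le_rfl le_rfl, by simp, by simp⟩

/-- Characterization of the principal ideal. -/
private lemma ideal_char (n : ℕ) (v : Fin 3 → ℤ) :
    v ∈ ideal3 ![(n : ℤ), 0, 0] ↔
      nonneg3 v ∧ v 0 + 2 * v 1 + 3 * v 2 ≤ (n : ℤ) ∧
        (3 : ℤ) ∣ ((n : ℤ) - (v 0 + 2 * v 1 + 3 * v 2)) := by
  constructor
  · rintro (rfl | hmem)
    · exact inv_top n
    · have hmem' : prec3 v ![(n : ℤ), 0, 0] := hmem
      clear hmem
      unfold prec3 at hmem'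
      induction hmem' using Relation.TransGen.head_induction_on with
      | single h => exact inv_step h ⟨(inv_top n).2.1, (inv_top n).2.2⟩
      | head h _ ihc => exact inv_step h ⟨ihc.2.1, ihc.2.2⟩
  · rintro ⟨hnn, hle, hdvd⟩
    obtain ⟨m, hm⟩ := hdvd
    have hm0 : 0 ≤ m := by nlinarith
    obtain ⟨k, rfl⟩ := Int.eq_ofNat_of_zero_le hm0
    have hreach := reach n v hnn k (by linarith)
    rcases Relation.reflTransGen_iff_eq_or_transGen.mp hreach with h | h
    · exact Or.inl h.symm
    · exact Or.inr h

theorem stmt18 (n : ℕ) :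
    (∀ a b : Fin 6 → ℕ, DChar a → DChar b →
      (∑ i, a i) = 2 * n → (∑ i, b i) = 2 * n →
      a 0 = b 0 → a 2 = b 2 → a 4 = b 4 → a = b) ∧
    Set.BijOn
      (fun a : Fin 6 → ℕ =>
        (![(a 0 : ℤ) - (a 2 : ℤ), (a 2 : ℤ) - (a 4 : ℤ), (a 4 : ℤ)] : Fin 3 → ℤ))
      { a : Fin 6 → ℕ | DChar a ∧ (∑ i, a i) = 2 * n }
      (ideal3 ![(n : ℤ), 0, 0]) := by
  have huniq : ∀ a b : Fin 6 → ℕ, DChar a → DChar b →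
      (∑ i, a i) = 2 * n → (∑ i, b i) = 2 * n →
      a 0 = b 0 → a 2 = b 2 → a 4 = b 4 → a = b := by
    intro a b hA hB hsa hsb h0 h2 h4
    obtain ⟨ha1, ha2, ha3, ha4, ha5⟩ := hA
    obtain ⟨hb1, hb2, hb3, hb4, hb5⟩ := hB
    rw [Fin.sum_univ_six] at hsa hsb
    have h1 : a 1 = b 1 := by omega
    have h3 : a 3 = b 3 := by omega
    have h5 : a 5 = b 5 := by omega
    funext i
    fin_cases i
    exacts [h0, h1, h2, h3, h4, h5]
  refine ⟨huniq, ?_, ?_, ?_⟩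
  · -- MapsTo
    rintro a ⟨⟨ha1, ha2, ha3, ha4, ha5⟩, hsum⟩
    rw [Fin.sum_univ_six] at hsum
    rw [ideal_char]
    refine ⟨nonneg3_mk (by push_cast; omega) (by push_cast; omega) (by positivity), ?_, ?_⟩
    · show ((a 0 : ℤ) - a 2) + 2 * ((a 2 : ℤ) - a 4) + 3 * (a 4 : ℤ) ≤ (n : ℤ)
      push_cast; omega
    · show (3 : ℤ) ∣ ((n : ℤ) - (((a 0 : ℤ) - a 2) + 2 * ((a 2 : ℤ) - a 4) + 3 * (a 4 : ℤ)))
      have key : 2 * ((n : ℤ) - ((a 0 : ℤ) + a 2 + a 4)) = 3 * ((a 1 : ℤ) - a 4) := by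
        push_cast; omega
      have heq : ((a 0 : ℤ) - a 2) + 2 * ((a 2 : ℤ) - a 4) + 3 * (a 4 : ℤ)
          = (a 0 : ℤ) + a 2 + a 4 := by ring
      rw [heq]
      omega
  · -- InjOn
    intro a ha b hb heq
    have e0 : ((a 0 : ℤ) - (a 2 : ℤ)) = ((b 0 : ℤ) - (b 2 : ℤ)) := congrFun heq 0
    have e1 : ((a 2 : ℤ) - (a 4 : ℤ)) = ((b 2 : ℤ) - (b 4 : ℤ)) := congrFun heq 1
    have e2 : ((a 4 : ℤ)) = ((b 4 : ℤ)) := congrFun heq 2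
    have h4 : a 4 = b 4 := by exact_mod_cast e2
    have h2 : a 2 = b 2 := by omega
    have h0 : a 0 = b 0 := by omega
    exact huniq a b ha.1 hb.1 ha.2 hb.2 h0 h2 h4
  · -- SurjOn
    intro v hv
    rw [ideal_char] at hv
    obtain ⟨hnn, hle, hdvd⟩ := hv
    obtain ⟨x, hx⟩ := Int.eq_ofNat_of_zero_le (hnn 0)
    obtain ⟨y, hy⟩ := Int.eq_ofNat_of_zero_le (hnn 1)
    obtain ⟨z, hz⟩ := Int.eq_ofNat_of_zero_le (hnn 2)
    rw [hx, hy, hz] at hle hdvd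
    obtain ⟨m, hm⟩ := hdvd
    have hm0 : 0 ≤ m := by nlinarith
    obtain ⟨k, rfl⟩ := Int.eq_ofNat_of_zero_le hm0
    have hnk : x + 2 * y + 3 * z + 3 * k = n := by
      have hc : (x : ℤ) + 2 * y + 3 * z + 3 * k = (n : ℤ) := by push_cast at hm ⊢; linarith
      exact_mod_cast hc
    refine ⟨![x + y + z, z + 2 * k, y + z, x + y + z + 2 * k, z, y + z + 2 * k], ⟨?_, ?_⟩, ?_⟩
    · refine ⟨?_, ?_, ?_, ?_, ?_⟩
      · show (x + y + z) + (z + 2 * k) = (x + y + z + 2 * k) + z; omega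
      · show (z + 2 * k) + (y + z) = z + (y + z + 2 * k); omega
      · show (x + y + z) + (y + z) + z ≤ (z + 2 * k) + (x + y + z + 2 * k) + (y + z + 2 * k)
        omega
      · show (y + z) ≤ (x + y + z); omega
      · show z ≤ y + z; omega
    · show (∑ i, (![x + y + z, z + 2 * k, y + z, x + y + z + 2 * k, z, y + z + 2 * k] :
        Fin 6 → ℕ) i) = 2 * n
      rw [Fin.sum_univ_six]
      show (x + y + z) + (z + 2 * k) + (y + z) + (x + y + z + 2 * k) + z + (y + z + 2 * k)
        = 2 * n
      omega
    · funext i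
      fin_cases i
      · show ((x + y + z : ℕ) : ℤ) - ((y + z : ℕ) : ℤ) = v 0
        rw [hx]; push_cast; ring
      · show ((y + z : ℕ) : ℤ) - ((z : ℕ) : ℤ) = v 1
        rw [hy]; push_cast; ring
      · show ((z : ℕ) : ℤ) = v 2
        rw [hz]
end
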